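/- Let K be a field of characteristic 0, U a nonempty finite subset of ℤ, and d with 2d ≤ k. Then the images in A_{U,k} = P_U/Ann(Φ_{U,k}) of the monomials {x^{M(V)} : V ∈ C(U,2d)} span the degree-d homogeneous component A^{(d)} as a K-vector space; equivalently, every homogeneous polynomial of degree d in P_U is congruent modulo Ann(Φ_{U,k}) to a K-linear combination of the monomials x^{M(V)}, V ∈ C(U,2d). -/

import Mathlib

open MvPolynomial Finset

noncomputable section

/-- The set of matchings with exactly `k` edges of the complete graph on vertex set `V ⊆ ℤ`:
sets of `k` pairwise disjoint 2-element subsets of `V`. -/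
def matchings (V : Finset ℤ) (k : ℕ) : Finset (Finset (Finset ℤ)) :=
  (V.powersetCard 2).powerset.filter fun M =>
    M.card = k ∧ ∀ e ∈ M, ∀ f ∈ M, e ≠ f → Disjoint e f

/-- `S` is a matching of the complete graph on vertex set `V`. -/
def IsMatching (V : Finset ℤ) (S : Finset (Finset ℤ)) : Prop :=
  S ⊆ V.powersetCard 2 ∧ ∀ e ∈ S, ∀ f ∈ S, e ≠ f → Disjoint e f

/-- The weighted generating function `Φ_{V,k} = Σ_{M ∈ M(V,k)} x^M` of `k`-edge matchings,
an element of the polynomial ring with variables indexed by (potential) edges. -/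
def Phi (K : Type*) [Field K] (V : Finset ℤ) (k : ℕ) : MvPolynomial (Finset ℤ) K :=
  ∑ M ∈ matchings V k, ∏ e ∈ M, X e

/-- The differential operator `∂^S = Π_{i ∈ S} ∂/∂x_i` applied to `p`. -/
def dset {K : Type*} [CommSemiring K] {ι : Type*} [DecidableEq ι]
    (S : Finset ι) (p : MvPolynomial ι K) : MvPolynomial ι K :=
  S.toList.foldr (fun i q => pderiv i q) p

/-- The differential operator `∂^m = Π_i (∂/∂x_i)^{m i}` of a monomial exponent `m`. -/
def dmon {K : Type*} [CommSemiring K] {ι : Type*} [DecidableEq ι]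
    (m : ι →₀ ℕ) (p : MvPolynomial ι K) : MvPolynomial ι K :=
  m.support.toList.foldr (fun i q => (⇑(pderiv (R := K) i))^[m i] q) p

/-- The linear map `f ↦ f(∂)Φ`, where `f(∂)` is obtained from `f` by substituting
`∂/∂x_i` for `x_i`. -/
def diffOp (K : Type*) [Field K] {ι : Type*} [DecidableEq ι]
    (Φ : MvPolynomial ι K) : MvPolynomial ι K →ₗ[K] MvPolynomial ι K :=
  (basisMonomials ι K).constr K fun m => dmon m Φ

/-- The annihilator `Ann(Φ) = {f : f(∂)Φ = 0}`. -/
def Ann (K : Type*) [Field K] {ι : Type*} [DecidableEq ι]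
    (Φ : MvPolynomial ι K) : Submodule K (MvPolynomial ι K) :=
  LinearMap.ker (diffOp K Φ)

/-- The canonical matching `M(V) = {{v₁,v₂},{v₃,v₄},…}` on `V = {v₁ < v₂ < ⋯}`. -/
def canonMatching (V : Finset ℤ) : Finset (Finset ℤ) :=
  (Finset.range (V.card / 2)).image fun i =>
    ({(V.sort (· ≤ ·)).getD (2 * i) 0, (V.sort (· ≤ ·)).getD (2 * i + 1) 0} : Finset ℤ)

/-- The `n`-th elementary symmetric polynomial in the variables indexed by `U`. -/
def elemSymm (K : Type*) [Field K] {ι : Type*} (U : Finset ι) (n : ℕ) : MvPolynomial ι K :=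
  ∑ S ∈ U.powersetCard n, ∏ i ∈ S, X i

end

section Helper
open MvPolynomial Finset
variable {K : Type*} [Field K]

noncomputable def ind (S : Finset (Finset ℤ)) : (Finset ℤ) →₀ ℕ :=
  ∑ e ∈ S, Finsupp.single e 1

lemma ind_apply (S : Finset (Finset ℤ)) (e : Finset ℤ) :
    ind S e = if e ∈ S then 1 else 0 := by
  classical
  rw [ind, Finset.sum_apply']
  simp [Finsupp.single_apply]

lemma ind_support (S : Finset (Finset ℤ)) : (ind S).support = S := by
  ext e
  simp [Finsupp.mem_support_iff, ind_apply]

lemma prod_X_eq (S : Finset (Finset ℤ)) :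
    (∏ e ∈ S, X e : MvPolynomial (Finset ℤ) K) = monomial (ind S) 1 := by
  classical
  induction S using Finset.induction with
  | empty => simp [ind]
  | insert a s h ih =>
    rw [Finset.prod_insert h, ih, X, monomial_mul, one_mul]
    congr 1
    rw [ind, ind, Finset.sum_insert h]

lemma pderiv_prod_X (S : Finset (Finset ℤ)) (e : Finset ℤ) :
    pderiv e (∏ f ∈ S, X f : MvPolynomial (Finset ℤ) K) =
      if e ∈ S then ∏ f ∈ S.erase e, X f else 0 := by
  classical
  rw [prod_X_eq, pderiv_monomial]
  by_cases h : e ∈ S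
  · rw [if_pos h, prod_X_eq, ind_apply, if_pos h, Nat.cast_one, mul_one]
    have hind : ind S - Finsupp.single e 1 = ind (S.erase e) := by
      ext f
      rw [Finsupp.tsub_apply]
      by_cases hf : f = e
      · subst hf; simp [ind_apply, h]
      · simp [ind_apply, Finsupp.single_apply, hf, Ne.symm hf, Finset.mem_erase]
    rw [hind]
  · rw [if_neg h, ind_apply, if_neg h, Nat.cast_zero, mul_zero, monomial_zero]

lemma mem_matchings {W : Finset ℤ} {k : ℕ} {M : Finset (Finset ℤ)} :
    M ∈ matchings W k ↔ M ⊆ W.powersetCard 2 ∧ M.card = k ∧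
      ∀ e ∈ M, ∀ f ∈ M, e ≠ f → Disjoint e f := by
  simp [matchings, Finset.mem_filter, Finset.mem_powerset, and_assoc]

lemma pderiv_Phi (W : Finset ℤ) (k : ℕ) (e : Finset ℤ) :
    pderiv e (Phi K W k) =
      if e ∈ W.powersetCard 2 ∧ 1 ≤ k then Phi K (W \ e) (k - 1) else 0 := by
  classical
  rw [Phi, map_sum]
  have : ∀ M ∈ matchings W k,
      pderiv e (∏ f ∈ M, X f : MvPolynomial (Finset ℤ) K) =
        if e ∈ M then ∏ f ∈ M.erase e, X f else 0 := fun M _ => pderiv_prod_X M e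
  rw [Finset.sum_congr rfl this, Finset.sum_ite, Finset.sum_const_zero, add_zero]
  by_cases h : e ∈ W.powersetCard 2 ∧ 1 ≤ k
  · rw [if_pos h, Phi]
    obtain ⟨he, hk⟩ := h
    obtain ⟨heW, hecard⟩ := Finset.mem_powersetCard.mp he
    apply Finset.sum_nbij' (fun M => M.erase e) (fun N => insert e N)
    · intro M hM
      rw [Finset.mem_filter] at hM
      obtain ⟨hM, heM⟩ := hM
      rw [mem_matchings] at hM
      obtain ⟨hsub, hcard, hdisj⟩ := hM
      rw [mem_matchings]
      refine ⟨?_, ?_, ?_⟩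
      · intro f hf
        have hfM := Finset.mem_of_mem_erase hf
        have hfe := Finset.ne_of_mem_erase hf
        obtain ⟨hfW, hfcard⟩ := Finset.mem_powersetCard.mp (hsub hfM)
        rw [Finset.mem_powersetCard]
        exact ⟨Finset.subset_sdiff.mpr ⟨hfW, hdisj f hfM e heM hfe⟩, hfcard⟩
      · rw [Finset.card_erase_of_mem heM, hcard]
      · intro a ha b hb hab
        exact hdisj a (Finset.mem_of_mem_erase ha) b (Finset.mem_of_mem_erase hb) hab
    · intro N hN
      rw [mem_matchings] at hN
      obtain ⟨hsub, hcard, hdisj⟩ := hN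
      have heN : e ∉ N := by
        intro heN
        obtain ⟨hfW, _⟩ := Finset.mem_powersetCard.mp (hsub heN)
        have : e.Nonempty := Finset.card_pos.mp (by omega)
        obtain ⟨x, hx⟩ := this
        have := hfW hx
        rw [Finset.mem_sdiff] at this
        exact this.2 hx
      rw [Finset.mem_filter]
      constructor
      · rw [mem_matchings]
        refine ⟨?_, ?_, ?_⟩
        · intro f hf
          rcases Finset.mem_insert.mp hf with rfl | hfN
          · exact he
          · obtain ⟨hfW, hfcard⟩ := Finset.mem_powersetCard.mp (hsub hfN)
            exact Finset.mem_powersetCard.mpr ⟨hfW.trans (Finset.sdiff_subset), hfcard⟩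
        · rw [Finset.card_insert_of_notMem heN, hcard]; omega
        · intro a ha b hb hab
          rcases Finset.mem_insert.mp ha with rfl | haN
          · rcases Finset.mem_insert.mp hb with rfl | hbN
            · exact absurd rfl hab
            · obtain ⟨hbW, _⟩ := Finset.mem_powersetCard.mp (hsub hbN)
              exact (Finset.disjoint_of_subset_left hbW Finset.sdiff_disjoint).symm
          · rcases Finset.mem_insert.mp hb with rfl | hbN
            · obtain ⟨haW, _⟩ := Finset.mem_powersetCard.mp (hsub haN)
              exact Finset.disjoint_of_subset_left haW Finset.sdiff_disjoint
            · exact hdisj a haN b hbN hab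
      · exact Finset.mem_insert_self e N
    · intro M hM
      rw [Finset.mem_filter] at hM
      exact Finset.insert_erase hM.2
    · intro N hN
      rw [mem_matchings] at hN
      have heN : e ∉ N := by
        intro heN
        obtain ⟨hfW, _⟩ := Finset.mem_powersetCard.mp (hN.1 heN)
        have : e.Nonempty := Finset.card_pos.mp (by omega)
        obtain ⟨x, hx⟩ := this
        have := hfW hx
        rw [Finset.mem_sdiff] at this
        exact this.2 hx
      exact Finset.erase_insert heN
    · intro M hM; rfl
  · rw [if_neg h]
    apply Finset.sum_eq_zero
    intro M hM
    rw [Finset.mem_filter] at hM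
    obtain ⟨hM, heM⟩ := hM
    rw [mem_matchings] at hM
    exfalso
    apply h
    exact ⟨hM.1 heM, by have := hM.2.1; have := Finset.card_pos.mpr ⟨e, heM⟩; omega⟩

end Helper
section Helper2
open MvPolynomial Finset
variable {K : Type*} [Field K]

lemma mem_foldr_union {x : ℤ} : ∀ L : List (Finset ℤ), x ∈ L.foldr (· ∪ ·) ∅ ↔ ∃ e ∈ L, x ∈ e
  | [] => by simp
  | a :: L => by simp [mem_foldr_union L]

lemma iter_pderiv_zero (i : Finset ℤ) (n : ℕ) :
    (⇑(pderiv (R := K) i))^[n] (0 : MvPolynomial (Finset ℤ) K) = 0 :=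
  Function.iterate_fixed (map_zero _) n

lemma pderiv_pderiv_Phi (a : Finset ℤ) (W : Finset ℤ) (k : ℕ) :
    pderiv a (pderiv a (Phi K W k)) = 0 := by
  rw [pderiv_Phi]
  by_cases h : a ∈ W.powersetCard 2 ∧ 1 ≤ k
  · rw [if_pos h, pderiv_Phi, if_neg]
    rintro ⟨h1, -⟩
    obtain ⟨hsub, hcard⟩ := Finset.mem_powersetCard.mp h1
    obtain ⟨x, hx⟩ := Finset.card_pos.mp (by omega : 0 < a.card)
    exact (Finset.mem_sdiff.mp (hsub hx)).2 hx
  · rw [if_neg h, map_zero]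

lemma iter_pderiv_Phi (a : Finset ℤ) (W : Finset ℤ) (k n : ℕ) (h2 : 2 ≤ n) :
    (⇑(pderiv (R := K) a))^[n] (Phi K W k) = 0 := by
  obtain ⟨j, rfl⟩ : ∃ j, n = j + 2 := ⟨n - 2, by omega⟩
  rw [Function.iterate_add_apply]
  have : (⇑(pderiv (R := K) a))^[2] (Phi K W k) = 0 := by
    simp only [Function.iterate_succ, Function.iterate_zero, Function.comp_apply, id_eq]
    exact pderiv_pderiv_Phi a W k
  rw [this, iter_pderiv_zero]

lemma foldr_pderiv_Phi (m : Finset ℤ →₀ ℕ) :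
    ∀ (L : List (Finset ℤ)), L.Nodup → (∀ i ∈ L, 1 ≤ m i) →
    ∀ (W : Finset ℤ) (k : ℕ), L.length ≤ k →
    L.foldr (fun i q => (⇑(pderiv (R := K) i))^[m i] q) (Phi K W k) =
      if (∀ i ∈ L, m i = 1) ∧ (∀ e ∈ L, e ∈ W.powersetCard 2) ∧ L.Pairwise Disjoint
      then Phi K (W \ L.foldr (· ∪ ·) ∅) (k - L.length) else 0 := by
  intro L
  induction L with
  | nil => intro _ _ W k _; simp
  | cons a L ih =>
    intro hnd hge W k hlen
    obtain ⟨-, hndL⟩ := List.nodup_cons.mp hnd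
    have hgeL : ∀ i ∈ L, 1 ≤ m i := fun i hi => hge i (List.mem_cons_of_mem a hi)
    have hlenL : L.length ≤ k := by simp at hlen; omega
    have hma : 1 ≤ m a := hge a (List.mem_cons_self)
    rw [List.foldr_cons, ih hndL hgeL W k hlenL]
    by_cases hC : (∀ i ∈ L, m i = 1) ∧ (∀ e ∈ L, e ∈ W.powersetCard 2) ∧ L.Pairwise Disjoint
    · rw [if_pos hC]
      obtain ⟨hC1, hC2, hC3⟩ := hC
      set UL := L.foldr (· ∪ ·) ∅ with hUL
      have hk' : 1 ≤ k - L.length := by simp at hlen; omega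
      by_cases ha : a ∈ (W \ UL).powersetCard 2
      · by_cases hma1 : m a = 1
        · rw [hma1, Function.iterate_one, pderiv_Phi, if_pos ⟨ha, hk'⟩, if_pos]
          · have harg : W \ (a :: L).foldr (· ∪ ·) ∅ = (W \ UL) \ a := by
              ext x
              simp only [List.foldr_cons, Finset.mem_sdiff, Finset.mem_union, ← hUL]
              tauto
            have hnum : k - (a :: L).length = k - L.length - 1 := by
              simp; omega
            rw [harg, hnum]
          · obtain ⟨hsub, hcard⟩ := Finset.mem_powersetCard.mp ha
            refine ⟨?_, ?_, ?_⟩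
            · intro i hi
              rcases List.mem_cons.mp hi with rfl | hiL
              · exact hma1
              · exact hC1 i hiL
            · intro e he
              rcases List.mem_cons.mp he with rfl | heL
              · exact Finset.mem_powersetCard.mpr
                  ⟨hsub.trans (Finset.sdiff_subset), hcard⟩
              · exact hC2 e heL
            · rw [List.pairwise_cons]
              refine ⟨?_, hC3⟩
              intro e heL
              rw [Finset.disjoint_left]
              intro x hxa hxe
              have := Finset.mem_sdiff.mp (hsub hxa)
              exact this.2 ((mem_foldr_union L).mpr ⟨e, heL, hxe⟩)
        · rw [iter_pderiv_Phi a _ _ _ (by omega), if_neg]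
          intro hcond
          exact hma1 (hcond.1 a (List.mem_cons_self))
      · obtain ⟨n, hn⟩ : ∃ n, m a = n + 1 := ⟨m a - 1, by omega⟩
        rw [hn, Function.iterate_succ_apply, pderiv_Phi, if_neg (fun h => ha h.1),
          iter_pderiv_zero, if_neg]
        rintro ⟨h1, h2, h3⟩
        apply ha
        have haW := h2 a (List.mem_cons_self)
        obtain ⟨hsub, hcard⟩ := Finset.mem_powersetCard.mp haW
        rw [Finset.mem_powersetCard]
        refine ⟨?_, hcard⟩
        intro x hx
        rw [Finset.mem_sdiff]
        refine ⟨hsub hx, ?_⟩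
        intro hxU
        obtain ⟨e, heL, hxe⟩ := (mem_foldr_union L).mp hxU
        have hdisj : Disjoint a e := (List.pairwise_cons.mp h3).1 e heL
        exact (Finset.disjoint_left.mp hdisj hx) hxe
    · rw [if_neg hC, iter_pderiv_zero, if_neg]
      rintro ⟨h1, h2, h3⟩
      exact hC ⟨fun i hi => h1 i (List.mem_cons_of_mem a hi),
        fun e he => h2 e (List.mem_cons_of_mem a he), h3.of_cons⟩

end Helper2
section Helper3
open MvPolynomial Finset
variable {K : Type*} [Field K]
open scoped Classical

/-- The property of an exponent `m` of being a squarefree matching monomial w.r.t. `U`. -/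
def MProp (U : Finset ℤ) (m : Finset ℤ →₀ ℕ) : Prop :=
  (∀ i ∈ m.support, m i = 1) ∧ (∀ e ∈ m.support, e ∈ U.powersetCard 2) ∧
    ∀ e ∈ m.support, ∀ f ∈ m.support, e ≠ f → Disjoint e f

lemma foldr_toList_union (S : Finset (Finset ℤ)) :
    S.toList.foldr (· ∪ ·) ∅ = S.biUnion id := by
  ext x
  simp [mem_foldr_union, Finset.mem_toList]

lemma dmon_Phi (m : Finset ℤ →₀ ℕ) (U : Finset ℤ) (k : ℕ) (hk : m.support.card ≤ k) :
    dmon m (Phi K U k) =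
      if MProp U m then Phi K (U \ m.support.biUnion id) (k - m.support.card) else 0 := by
  rw [dmon, foldr_pderiv_Phi m _ (Finset.nodup_toList _)
      (fun i hi => Nat.one_le_iff_ne_zero.mpr
        (Finsupp.mem_support_iff.mp (Finset.mem_toList.mp hi)))
      U k (by rw [Finset.length_toList]; exact hk)]
  rw [foldr_toList_union, Finset.length_toList]
  refine if_congr ?_ rfl rfl
  rw [MProp]
  constructor
  · rintro ⟨h1, h2, h3⟩
    refine ⟨fun i hi => h1 i (Finset.mem_toList.mpr hi),
      fun e he => h2 e (Finset.mem_toList.mpr he), fun e he f hf hef => ?_⟩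
    exact h3.forall (Finset.mem_toList.mpr he)
      (Finset.mem_toList.mpr hf) hef
  · rintro ⟨h1, h2, h3⟩
    refine ⟨fun i hi => h1 i (Finset.mem_toList.mp hi),
      fun e he => h2 e (Finset.mem_toList.mp he), ?_⟩
    exact (Finset.nodup_toList _).pairwise_of_forall_ne
      (fun a ha b hb hab => h3 a (Finset.mem_toList.mp ha) b (Finset.mem_toList.mp hb) hab)

section Canon
variable {V : Finset ℤ} {d : ℕ} (hV : V.card = 2 * d)
include hV

lemma canon_pt_mem (j : ℕ) (hj : j < 2 * d) : (V.sort (· ≤ ·)).getD j 0 ∈ V := by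
  have hlen : (V.sort (· ≤ ·)).length = 2 * d := by rw [Finset.length_sort, hV]
  rw [List.getD_eq_getElem _ _ (by omega)]
  exact (Finset.mem_sort _).mp (List.getElem_mem _)

lemma canon_pt_lt (i j : ℕ) (hij : i < j) (hj : j < 2 * d) :
    (V.sort (· ≤ ·)).getD i 0 < (V.sort (· ≤ ·)).getD j 0 := by
  have hlen : (V.sort (· ≤ ·)).length = 2 * d := by rw [Finset.length_sort, hV]
  rw [List.getD_eq_getElem _ _ (by omega), List.getD_eq_getElem _ _ (by omega)]
  exact (Finset.sortedLT_sort V).getElem_lt_getElem_iff.mpr hij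

lemma canon_pt_ne (i j : ℕ) (hij : i ≠ j) (hi : i < 2 * d) (hj : j < 2 * d) :
    (V.sort (· ≤ ·)).getD i 0 ≠ (V.sort (· ≤ ·)).getD j 0 := by
  rcases Nat.lt_or_ge i j with h | h
  · exact ne_of_lt (canon_pt_lt hV i j h hj)
  · exact (ne_of_lt (canon_pt_lt hV j i (by omega) hi)).symm

lemma canonMatching_mem (e : Finset ℤ) (he : e ∈ canonMatching V) :
    ∃ i < d, e = {(V.sort (· ≤ ·)).getD (2 * i) 0, (V.sort (· ≤ ·)).getD (2 * i + 1) 0} := by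
  rw [canonMatching] at he
  obtain ⟨i, hi, rfl⟩ := Finset.mem_image.mp he
  rw [Finset.mem_range, hV, Nat.mul_div_cancel_left d (by norm_num)] at hi
  exact ⟨i, hi, rfl⟩

lemma canonMatching_edge (e : Finset ℤ) (he : e ∈ canonMatching V) :
    e ∈ V.powersetCard 2 := by
  obtain ⟨i, hi, rfl⟩ := canonMatching_mem hV e he
  rw [Finset.mem_powersetCard]
  constructor
  · intro x hx
    rcases Finset.mem_insert.mp hx with rfl | hx
    · exact canon_pt_mem hV _ (by omega)
    · rw [Finset.mem_singleton] at hx; subst hx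
      exact canon_pt_mem hV _ (by omega)
  · rw [Finset.card_insert_of_notMem (by
      simp only [Finset.mem_singleton]
      exact canon_pt_ne hV _ _ (by omega) (by omega) (by omega)), Finset.card_singleton]

lemma canonMatching_disjoint (e : Finset ℤ) (he : e ∈ canonMatching V)
    (f : Finset ℤ) (hf : f ∈ canonMatching V) (hef : e ≠ f) : Disjoint e f := by
  obtain ⟨i, hi, rfl⟩ := canonMatching_mem hV e he
  obtain ⟨j, hj, rfl⟩ := canonMatching_mem hV f hf
  have hij : i ≠ j := by rintro rfl; exact hef rfl
  rw [Finset.disjoint_left]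
  intro x hx hx'
  rw [Finset.mem_insert, Finset.mem_singleton] at hx hx'
  rcases hx with rfl | rfl
  · rcases hx' with h | h
    · exact canon_pt_ne hV (2 * i) (2 * j) (by omega) (by omega) (by omega) h
    · exact canon_pt_ne hV (2 * i) (2 * j + 1) (by omega) (by omega) (by omega) h
  · rcases hx' with h | h
    · exact canon_pt_ne hV (2 * i + 1) (2 * j) (by omega) (by omega) (by omega) h
    · exact canon_pt_ne hV (2 * i + 1) (2 * j + 1) (by omega) (by omega) (by omega) h

lemma canonMatching_card : (canonMatching V).card = d := by
  rw [canonMatching, hV, Nat.mul_div_cancel_left d (by norm_num)]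
  rw [Finset.card_image_of_injOn, Finset.card_range]
  intro i hi j hj hij
  rw [Finset.mem_coe, Finset.mem_range] at hi hj
  by_contra hne
  have h1 := canon_pt_ne hV (2 * i) (2 * j) (by omega) (by omega) (by omega)
  have h2 := canon_pt_ne hV (2 * i) (2 * j + 1) (by omega) (by omega) (by omega)
  dsimp only at hij
  have : (V.sort (· ≤ ·)).getD (2 * i) 0 ∈
      ({(V.sort (· ≤ ·)).getD (2 * j) 0, (V.sort (· ≤ ·)).getD (2 * j + 1) 0} : Finset ℤ) := by
    rw [← hij]; exact Finset.mem_insert_self _ _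
  rcases Finset.mem_insert.mp this with h | h
  · exact h1 h
  · rw [Finset.mem_singleton] at h; exact h2 h

lemma canonMatching_biUnion : (canonMatching V).biUnion id = V := by
  apply Finset.Subset.antisymm
  · intro x hx
    rw [Finset.mem_biUnion] at hx
    obtain ⟨e, he, hx⟩ := hx
    exact (Finset.mem_powersetCard.mp (canonMatching_edge hV e he)).1 hx
  · intro x hx
    have hlen : (V.sort (· ≤ ·)).length = 2 * d := by rw [Finset.length_sort, hV]
    have : x ∈ V.sort (· ≤ ·) := (Finset.mem_sort _).mpr hx
    obtain ⟨j, hjlen, hj⟩ := List.mem_iff_getElem.mp this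
    rw [Finset.mem_biUnion]
    obtain ⟨i, hi, hcase⟩ : ∃ i, i < d ∧ (j = 2 * i ∨ j = 2 * i + 1) :=
      ⟨j / 2, by omega, by omega⟩
    refine ⟨{(V.sort (· ≤ ·)).getD (2 * i) 0, (V.sort (· ≤ ·)).getD (2 * i + 1) 0}, ?_, ?_⟩
    · rw [canonMatching, hV, Nat.mul_div_cancel_left d (by norm_num)]
      exact Finset.mem_image.mpr ⟨i, Finset.mem_range.mpr hi, rfl⟩
    · rw [id, Finset.mem_insert, Finset.mem_singleton]
      rcases hcase with rfl | rfl
      · left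
        rw [List.getD_eq_getElem _ _ (by omega)]
        exact hj.symm
      · right
        rw [List.getD_eq_getElem _ _ (by omega)]
        exact hj.symm

end Canon
end Helper3
section Final
open MvPolynomial Finset
variable {K : Type*} [Field K]
open scoped Classical

lemma diffOp_monomial_one (Φ : MvPolynomial (Finset ℤ) K) (m : Finset ℤ →₀ ℕ) :
    diffOp K Φ (monomial m 1) = dmon m Φ := by
  have hb : (basisMonomials (Finset ℤ) K) m = monomial m 1 :=
    congrFun (coe_basisMonomials _ _) m
  rw [← hb, diffOp, Module.Basis.constr_basis]

lemma diffOp_apply (Φ p : MvPolynomial (Finset ℤ) K) :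
    diffOp K Φ p = ∑ m ∈ p.support, coeff m p • dmon m Φ := by
  conv_lhs => rw [p.as_sum]
  rw [map_sum]
  apply Finset.sum_congr rfl
  intro m _
  have : (monomial m (coeff m p) : MvPolynomial (Finset ℤ) K)
      = coeff m p • monomial m 1 := by
    rw [smul_monomial, smul_eq_mul, mul_one]
  rw [this, map_smul, diffOp_monomial_one]

lemma MProp_card {U : Finset ℤ} {m : Finset ℤ →₀ ℕ} {n : ℕ} (h : ∀ i ∈ m.support, m i = 1)
    (hs : ∑ i ∈ m.support, m i = n) : m.support.card = n := by
  rw [← hs, Finset.card_eq_sum_ones]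
  exact Finset.sum_congr rfl (fun i hi => (h i hi).symm)

lemma MProp_biUnion_mem {U : Finset ℤ} {m : Finset ℤ →₀ ℕ} {d : ℕ} (h : MProp U m)
    (hcard : m.support.card = d) : m.support.biUnion id ∈ U.powersetCard (2 * d) := by
  obtain ⟨h1, h2, h3⟩ := h
  rw [Finset.mem_powersetCard]
  constructor
  · intro x hx
    rw [Finset.mem_biUnion] at hx
    obtain ⟨e, he, hx⟩ := hx
    exact (Finset.mem_powersetCard.mp (h2 e he)).1 hx
  · have hcb : (m.support.biUnion id).card = ∑ u ∈ m.support, (id u).card :=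
      Finset.card_biUnion h3
    have h2' : ∀ e ∈ m.support, (id e).card = 2 :=
      fun e he => (Finset.mem_powersetCard.mp (h2 e he)).2
    rw [hcb, Finset.sum_congr rfl h2', Finset.sum_const, hcard, smul_eq_mul, mul_comm]

end Final

/-- for `2d ≤ k`, the monomials `x^{M(V)}`, `V ∈ C(U,2d)`, span the degree-`d`
component of `A_{U,k}`: every homogeneous `f` of degree `d` is congruent mod `Ann(Φ_{U,k})`
to a `K`-linear combination of the `x^{M(V)}`. -/
theorem canonical_monomials_span {K : Type*} [Field K] [CharZero K]
    (U : Finset ℤ) (hU : U.Nonempty) (k d : ℕ) (hd : 2 * d ≤ k)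
    (f : MvPolynomial (Finset ℤ) K) (hf : f.IsHomogeneous d) :
    ∃ c : Finset ℤ → K,
      f - ∑ V ∈ U.powersetCard (2 * d), c V • ∏ e ∈ canonMatching V, X e ∈
        Ann K (Phi K U k) := by
  classical
  open MvPolynomial Finset in
  set Φ := Phi K U k with hΦ
  have hdeg : ∀ m ∈ f.support, ∑ i ∈ m.support, m i = d := by
    intro m hm
    have h := hf (MvPolynomial.mem_support_iff.mp hm)
    simp only [Finsupp.weight_apply, Pi.one_apply, smul_eq_mul, mul_one, Finsupp.sum] at h
    exact h
  refine ⟨fun V => ∑ m ∈ f.support.filter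
      (fun m => MProp U m ∧ m.support.biUnion id = V), MvPolynomial.coeff m f, ?_⟩
  rw [Ann, LinearMap.mem_ker, map_sub, sub_eq_zero]
  -- compute RHS: diffOp of the linear combination of canonical matching monomials
  rw [map_sum]
  have hRHS : ∀ V ∈ U.powersetCard (2 * d),
      diffOp K Φ ((∑ m ∈ f.support.filter
          (fun m => MProp U m ∧ m.support.biUnion id = V), MvPolynomial.coeff m f) •
        ∏ e ∈ canonMatching V, MvPolynomial.X e)
      = (∑ m ∈ f.support.filter
          (fun m => MProp U m ∧ m.support.biUnion id = V), MvPolynomial.coeff m f) •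
        Phi K (U \ V) (k - d) := by
    intro V hV
    obtain ⟨hVU, hVcard⟩ := Finset.mem_powersetCard.mp hV
    rw [map_smul]
    congr 1
    have hMP : MProp U (ind (canonMatching V)) := by
      refine ⟨?_, ?_, ?_⟩ <;> rw [ind_support]
      · intro i hi; rw [ind_apply, if_pos hi]
      · intro e he
        obtain ⟨heV, hecard⟩ := Finset.mem_powersetCard.mp (canonMatching_edge hVcard e he)
        exact Finset.mem_powersetCard.mpr ⟨heV.trans hVU, hecard⟩
      · exact canonMatching_disjoint hVcard
    rw [prod_X_eq, diffOp_monomial_one, hΦ, dmon_Phi _ U k ?hk]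
    case hk =>
      rw [ind_support, canonMatching_card hVcard]
      omega
    rw [if_pos hMP, ind_support, canonMatching_biUnion hVcard, canonMatching_card hVcard]
  rw [Finset.sum_congr rfl hRHS]
  -- compute LHS
  have hL : diffOp K Φ f = ∑ m ∈ f.support,
      if MProp U m then MvPolynomial.coeff m f • Phi K (U \ m.support.biUnion id) (k - d)
      else 0 := by
    rw [diffOp_apply]
    apply Finset.sum_congr rfl
    intro m hm
    have hsum := hdeg m hm
    have hcard : m.support.card ≤ d := by
      rw [← hsum, Finset.card_eq_sum_ones]
      exact Finset.sum_le_sum (fun i hi =>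
        Nat.one_le_iff_ne_zero.mpr (Finsupp.mem_support_iff.mp hi))
    rw [hΦ, dmon_Phi m U k (by omega)]
    by_cases hP : MProp U m
    · have hA : ∀ i ∈ m.support, m i = 1 := by obtain ⟨hA, -, -⟩ := hP; exact hA
      rw [if_pos hP, if_pos hP, MProp_card (U := U) hA hsum]
    · rw [if_neg hP, if_neg hP, smul_zero]
  rw [hL, Finset.sum_ite, Finset.sum_const_zero, add_zero]
  rw [← Finset.sum_fiberwise_of_maps_to (g := fun m => m.support.biUnion id)
    (t := U.powersetCard (2 * d)) ?hmaps]
  case hmaps =>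
    intro m hm
    obtain ⟨hm1, hm2⟩ := Finset.mem_filter.mp hm
    have hA : ∀ i ∈ m.support, m i = 1 := by obtain ⟨hA, -, -⟩ := hm2; exact hA
    exact MProp_biUnion_mem hm2 (MProp_card (U := U) hA (hdeg m hm1))
  apply Finset.sum_congr rfl
  intro V hV
  rw [Finset.filter_filter]
  have hrw : ∀ m ∈ f.support.filter (fun m => MProp U m ∧ m.support.biUnion id = V),
      MvPolynomial.coeff m f • Phi K (U \ m.support.biUnion id) (k - d)
        = MvPolynomial.coeff m f • Phi K (U \ V) (k - d) := by
    intro m hm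
    obtain ⟨-, -, hV'⟩ := Finset.mem_filter.mp hm
    rw [hV']
  rw [Finset.sum_congr rfl hrw, ← Finset.sum_smul]
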